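/- Let M be a compact smooth manifold, E a smooth complex vector bundle of finite rank over M, and x ∈ M. Then the kernel of the evaluation map ev_x : Γ^∞(E) → E_x, s ↦ s(x), equals the submodule I_x·Γ^∞(E) generated by products f·s with f ∈ I_x and s ∈ Γ^∞(E); consequently ev_x induces a ℂ-linear isomorphism Γ^∞(E)/(I_x·Γ^∞(E)) ≅ E_x. -/

import Mathlib

open Bundle Manifold
open scoped TensorProduct

local notation "∞" => (⊤ : ℕ∞)

noncomputable section

/-- Complex multiplication and addition are smooth over `ℝ`, so that the complex-valued smooth
functions on a real manifold form a (comm)ring. -/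
instance : ContMDiffRing 𝓘(ℝ, ℂ) ∞ ℂ where
  contMDiff_add := by
    rw [contMDiff_iff]
    refine ⟨continuous_add, fun x y => ?_⟩
    simp only [mfld_simps]
    exact contDiff_add.contDiffOn
  contMDiff_mul := by
    rw [contMDiff_iff]
    refine ⟨continuous_mul, fun x y => ?_⟩
    simp only [mfld_simps]
    exact contDiff_mul.contDiffOn

variable {EM : Type*} [NormedAddCommGroup EM] [NormedSpace ℝ EM] [FiniteDimensional ℝ EM]
  {HM : Type*} [TopologicalSpace HM] {IM : ModelWithCorners ℝ EM HM}
  {M : Type*} [TopologicalSpace M] [ChartedSpace HM M] [IsManifold IM ∞ M]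
  [T2Space M] [SecondCountableTopology M] [CompactSpace M]

/-- The constant functions make the smooth complex-valued functions a `ℂ`-algebra. -/
instance : Algebra ℂ C^∞⟮IM, M; 𝓘(ℝ, ℂ), ℂ⟯ :=
  RingHom.toAlgebra
    { toFun := fun c => ⟨fun _ => c, contMDiff_const⟩
      map_one' := rfl
      map_mul' := fun _ _ => rfl
      map_zero' := rfl
      map_add' := fun _ _ => rfl }

/-- `I_x`, the ideal of smooth complex-valued functions vanishing at the point `x`. -/
def SmoothMap.idealOfPoint (x : M) : Ideal C^∞⟮IM, M; 𝓘(ℝ, ℂ), ℂ⟯ :=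
  RingHom.ker (ContMDiffMap.evalRingHom x : C^∞⟮IM, M; 𝓘(ℝ, ℂ), ℂ⟯ →+* ℂ)

variable {F : Type*} [NormedAddCommGroup F] [NormedSpace ℂ F] [FiniteDimensional ℂ F]
  {V : M → Type*} [TopologicalSpace (TotalSpace F V)]
  [∀ x, AddCommGroup (V x)] [∀ x, Module ℂ (V x)] [∀ x, TopologicalSpace (V x)]
  [FiberBundle F V] [VectorBundle ℂ F V] [VectorBundle ℝ F V] [ContMDiffVectorBundle ∞ F V IM]

/-- Pointwise scalar multiplication of a smooth section by a smooth function. -/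
instance ContMDiffSection.instSMulSmoothMap :
    SMul C^∞⟮IM, M; 𝓘(ℝ, ℂ), ℂ⟯ Cₛ^∞⟮IM; F, V⟯ := by
  refine ⟨fun f s => ⟨fun x => f x • s x, ?_⟩⟩
  intro x₀
  have hs := s.contMDiff x₀
  have hf : ContMDiffAt IM 𝓘(ℝ, ℂ) ∞ f x₀ := f.contMDiff x₀
  rw [contMDiffAt_section] at hs ⊢
  set e := trivializationAt F V x₀
  have h1 : ContMDiffAt IM 𝓘(ℝ, F →L[ℝ] F) ∞
      (fun x => (ContinuousLinearMap.lsmul ℝ ℂ (f x) : F →L[ℝ] F)) x₀ :=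
    ContDiff.comp_contMDiffAt
      (g := ⇑(ContinuousLinearMap.lsmul ℝ ℂ : ℂ →L[ℝ] F →L[ℝ] F))
      (ContinuousLinearMap.contDiff _) hf
  refine (h1.clm_apply hs).congr_of_eventuallyEq ?_
  refine Filter.eventually_of_mem
    (e.open_baseSet.mem_nhds <| mem_baseSet_trivializationAt F V x₀) ?_
  intro x hx
  simp only [ContinuousLinearMap.lsmul_apply]
  exact (e.linear ℂ hx).2 (f x) (s x)

set_option linter.unusedSectionVars false in
@[simp]
theorem ContMDiffSection.coe_smul_smoothMap (f : C^∞⟮IM, M; 𝓘(ℝ, ℂ), ℂ⟯)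
    (s : Cₛ^∞⟮IM; F, V⟯) (x : M) : (f • s) x = f x • s x :=
  rfl

/-- The smooth sections of a smooth complex vector bundle form a module over the algebra of
smooth complex-valued functions on the base. -/
instance ContMDiffSection.instModuleSmoothMap :
    Module C^∞⟮IM, M; 𝓘(ℝ, ℂ), ℂ⟯ Cₛ^∞⟮IM; F, V⟯ where
  one_smul s := ContMDiffSection.ext fun x => one_smul ℂ (s x)
  mul_smul f g s := ContMDiffSection.ext fun x => mul_smul (f x) (g x) (s x)
  smul_zero f := ContMDiffSection.ext fun x => smul_zero (f x)
  smul_add f s t := ContMDiffSection.ext fun x => smul_add (f x) (s x) (t x)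
  add_smul f g s := ContMDiffSection.ext fun x => add_smul (f x) (g x) (s x)
  zero_smul s := ContMDiffSection.ext fun x => zero_smul ℂ (s x)

instance ContMDiffSection.instModuleComplex : Module ℂ Cₛ^∞⟮IM; F, V⟯ :=
  Module.compHom _ (algebraMap ℂ C^∞⟮IM, M; 𝓘(ℝ, ℂ), ℂ⟯)

instance ContMDiffSection.instIsScalarTowerComplex :
    IsScalarTower ℂ C^∞⟮IM, M; 𝓘(ℝ, ℂ), ℂ⟯ Cₛ^∞⟮IM; F, V⟯ :=
  ⟨fun c f s => by
    show (c • f) • s = algebraMap ℂ C^∞⟮IM, M; 𝓘(ℝ, ℂ), ℂ⟯ c • f • s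
    rw [Algebra.smul_def, mul_smul]⟩

/-- Complexification of a real-valued smooth map. -/
def SmoothMap.ofRealSmooth (χ : C^∞⟮IM, M; 𝓘(ℝ), ℝ⟯) : C^∞⟮IM, M; 𝓘(ℝ, ℂ), ℂ⟯ :=
  ⟨fun y => (χ y : ℂ), Complex.ofRealCLM.contDiff.comp_contMDiff χ.contMDiff⟩

@[simp]
theorem SmoothMap.ofRealSmooth_apply (χ : C^∞⟮IM, M; 𝓘(ℝ), ℝ⟯) (y : M) :
    SmoothMap.ofRealSmooth (IM := IM) χ y = (χ y : ℂ) := rfl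

set_option linter.unusedSectionVars false in
/-- A cut-off of the local frame section `y ↦ e.symm y v` is globally smooth. -/
theorem secOf_contMDiff (x : M) (χ : C^∞⟮IM, M; 𝓘(ℝ, ℂ), ℂ⟯)
    (hχ : tsupport ⇑χ ⊆ (trivializationAt F V x).baseSet) (v : F) :
    ContMDiff IM (IM.prod 𝓘(ℝ, F)) ∞ fun y =>
      TotalSpace.mk' F y (χ y • (trivializationAt F V x).symmL ℂ y v) := by
  intro y₀
  set e := trivializationAt F V x with he
  by_cases hy : y₀ ∈ tsupport ⇑χ
  · have hbs : y₀ ∈ e.baseSet := hχ hy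
    rw [e.contMDiffAt_iff (by simpa [e.mem_source] using hbs)]
    refine ⟨contMDiffAt_id, ?_⟩
    have hχs : ContMDiffAt IM 𝓘(ℝ, F) ∞ (fun y => χ y • v) y₀ :=
      (((ContinuousLinearMap.id ℝ ℂ).smulRight v).contDiff).comp_contMDiffAt (χ.contMDiff y₀)
    refine hχs.congr_of_eventuallyEq ?_
    filter_upwards [e.open_baseSet.mem_nhds hbs] with y hy'
    have h1 : (e ⟨y, χ y • (e.symmL ℂ y v : V y)⟩).2 = χ y • (e ⟨y, (e.symmL ℂ y v : V y)⟩).2 :=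
      (e.linear ℂ hy').map_smul (χ y) _
    have h2 : (e ⟨y, (e.symmL ℂ y v : V y)⟩).2 = v :=
      by rw [e.symmL_apply hy']; exact congr_arg Prod.snd (e.apply_mk_symm hy' v)
    rw [h1, h2]
  · refine ((contMDiff_zeroSection ℝ V) y₀).congr_of_eventuallyEq ?_
    filter_upwards [(isClosed_tsupport ⇑χ).isOpen_compl.mem_nhds hy] with y hy'
    have h0 : χ y = 0 := image_eq_zero_of_notMem_tsupport hy'
    simp [Bundle.zeroSection, h0]

set_option linter.unusedSectionVars false in
/-- The cut-off coefficient functions of a smooth section are globally smooth. -/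
theorem coefOf_contMDiff (x : M) (χ : C^∞⟮IM, M; 𝓘(ℝ, ℂ), ℂ⟯)
    (hχ : tsupport ⇑χ ⊆ (trivializationAt F V x).baseSet) (s : Cₛ^∞⟮IM; F, V⟯)
    (L : F →L[ℂ] ℂ) :
    ContMDiff IM 𝓘(ℝ, ℂ) ∞ fun y =>
      χ y * L ((trivializationAt F V x) ⟨y, s y⟩).2 := by
  intro y₀
  set e := trivializationAt F V x with he
  by_cases hy : y₀ ∈ tsupport ⇑χ
  · have hbs : y₀ ∈ e.baseSet := hχ hy
    have hsnd : ContMDiffAt IM 𝓘(ℝ, F) ∞ (fun y => (e ⟨y, s y⟩).2) y₀ :=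
      ((e.contMDiffAt_iff (by simpa [e.mem_source] using hbs)).mp (s.contMDiff y₀)).2
    exact (χ.contMDiff y₀).mul ((L.restrictScalars ℝ).contDiff.comp_contMDiffAt hsnd)
  · refine (contMDiffAt_const (c := 0)).congr_of_eventuallyEq ?_
    filter_upwards [(isClosed_tsupport ⇑χ).isOpen_compl.mem_nhds hy] with y hy'
    have h0 : χ y = 0 := image_eq_zero_of_notMem_tsupport hy'
    simp [h0]

/-- The kernel of the evaluation of sections at `x` is exactly `I_x · Γ^∞(E)`; consequently
evaluation induces a `ℂ`-linear isomorphism `Γ^∞(E)/(I_x · Γ^∞(E)) ≅ E_x`. -/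
theorem eval_ker_eq_idealOfPoint_smul (x : M) :
    (∀ s : Cₛ^∞⟮IM; F, V⟯,
      s x = 0 ↔ s ∈ SmoothMap.idealOfPoint (IM := IM) x • (⊤ : Submodule C^∞⟮IM, M; 𝓘(ℝ, ℂ), ℂ⟯ Cₛ^∞⟮IM; F, V⟯)) ∧
    ∃ e : (Cₛ^∞⟮IM; F, V⟯ ⧸
        (SmoothMap.idealOfPoint (IM := IM) x • (⊤ : Submodule C^∞⟮IM, M; 𝓘(ℝ, ℂ), ℂ⟯ Cₛ^∞⟮IM; F, V⟯)))
        ≃ₗ[ℂ] V x,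
      ∀ s : Cₛ^∞⟮IM; F, V⟯, e (Submodule.Quotient.mk s) = s x := by
  classical
  set N : Submodule C^∞⟮IM, M; 𝓘(ℝ, ℂ), ℂ⟯ Cₛ^∞⟮IM; F, V⟯ :=
    SmoothMap.idealOfPoint (IM := IM) x • (⊤ : Submodule C^∞⟮IM, M; 𝓘(ℝ, ℂ), ℂ⟯ Cₛ^∞⟮IM; F, V⟯)
    with hNdef
  -- the easy direction
  have h_easy : ∀ s : Cₛ^∞⟮IM; F, V⟯, s ∈ N → s x = 0 := by
    intro s hs
    refine Submodule.smul_induction_on hs (fun f hf t _ => ?_) (fun t u ht hu => ?_)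
    · have hfx : f x = 0 := hf
      show (f • t) x = 0
      rw [ContMDiffSection.coe_smul_smoothMap, hfx, zero_smul]
    · show (t + u) x = 0
      have : (⇑(t + u) : ∀ y, V y) = ⇑t + ⇑u := ContMDiffSection.coe_add t u
      rw [congrFun this x, Pi.add_apply, ht, hu, add_zero]
  -- the geometric setup
  set e := trivializationAt F V x with he
  have hx : x ∈ e.baseSet := FiberBundle.mem_baseSet_trivializationAt F V x
  obtain ⟨W₃, hW₃o, hxW₃, hW₃⟩ := normal_exists_closure_subset (isClosed_singleton (x := x))
    e.open_baseSet (Set.singleton_subset_iff.mpr hx)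
  obtain ⟨W₂, hW₂o, hxW₂, hW₂⟩ := normal_exists_closure_subset (isClosed_singleton (x := x))
    hW₃o hxW₃
  obtain ⟨W₁, hW₁o, hxW₁, hW₁⟩ := normal_exists_closure_subset (isClosed_singleton (x := x))
    hW₂o hxW₂
  obtain ⟨χ₁, hχ₁0, hχ₁1, -⟩ := exists_contMDiffMap_zero_one_of_isClosed (n := ∞) IM
    (isClosed_compl_iff.mpr hW₂o) isClosed_closure
    (Set.disjoint_left.mpr fun y hy hy2 => hy (hW₁ hy2))
  obtain ⟨χ₂, hχ₂0, hχ₂1, -⟩ := exists_contMDiffMap_zero_one_of_isClosed (n := ∞) IM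
    (isClosed_compl_iff.mpr hW₃o) isClosed_closure
    (Set.disjoint_left.mpr fun y hy hy2 => hy (hW₂ hy2))
  set χ₁c := SmoothMap.ofRealSmooth (IM := IM) χ₁ with hχ₁c
  set χ₂c := SmoothMap.ofRealSmooth (IM := IM) χ₂ with hχ₂c
  have hsupp₁ : tsupport ⇑χ₁c ⊆ closure W₂ := by
    refine closure_minimal (fun y hy => ?_) isClosed_closure |>.trans
      (closure_mono (Set.Subset.refl _))
    by_contra hyW
    exact hy (by simp [hχ₁c, hχ₁0 (fun h => hyW (subset_closure h))])
  have hsupp₂ : tsupport ⇑χ₂c ⊆ closure W₃ := by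
    refine closure_minimal (fun y hy => ?_) isClosed_closure |>.trans
      (closure_mono (Set.Subset.refl _))
    by_contra hyW
    exact hy (by simp [hχ₂c, hχ₂0 (fun h => hyW (subset_closure h))])
  have hsupp₁U : tsupport ⇑χ₁c ⊆ e.baseSet :=
    hsupp₁.trans ((hW₂.trans subset_closure).trans hW₃)
  have hsupp₂U : tsupport ⇑χ₂c ⊆ e.baseSet := hsupp₂.trans hW₃
  -- the frame sections and the coefficient functions
  set bF := Module.finBasis ℂ F with hbF
  set Lc : Fin (Module.finrank ℂ F) → (F →L[ℂ] ℂ) :=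
    fun i => LinearMap.toContinuousLinearMap (bF.coord i) with hLc
  set σs : Fin (Module.finrank ℂ F) → Cₛ^∞⟮IM; F, V⟯ := fun i =>
    ⟨fun y => χ₂c y • e.symmL ℂ y (bF i), secOf_contMDiff x χ₂c hsupp₂U (bF i)⟩ with hσs
  -- the hard direction
  have h_hard : ∀ s : Cₛ^∞⟮IM; F, V⟯, s x = 0 → s ∈ N := by
    intro s hsx
    set g : Fin (Module.finrank ℂ F) → C^∞⟮IM, M; 𝓘(ℝ, ℂ), ℂ⟯ := fun i =>
      ⟨fun y => χ₁c y * Lc i ((e ⟨y, s y⟩).2), coefOf_contMDiff x χ₁c hsupp₁U s (Lc i)⟩ with hg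
    have hdecomp : s = (1 - χ₁c) • s + ∑ i, g i • σs i := by
      apply ContMDiffSection.ext
      intro y
      have hsum : (∑ i, g i • σs i) y = ∑ i, (g i • σs i) y := by
        have := map_sum (ContMDiffSection.coeAddHom IM F ∞ V) (fun i => g i • σs i)
          Finset.univ
        rw [show ((∑ i, g i • σs i : Cₛ^∞⟮IM; F, V⟯) : ∀ y, V y)
            = ∑ i, ⇑(g i • σs i) from this, Finset.sum_apply]
      have hadd : ((1 - χ₁c) • s + ∑ i, g i • σs i) y
          = ((1 - χ₁c) • s) y + (∑ i, g i • σs i) y := by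
        rw [congrFun (ContMDiffSection.coe_add _ _) y, Pi.add_apply]
      have key : (∑ i, (g i • σs i) y) = χ₁c y • s y := by
        by_cases hy : χ₁ y = 0
        · have hzero : χ₁c y = 0 := by simp [hχ₁c, hy]
          simp only [ContMDiffSection.coe_smul_smoothMap]
          simp [hg, hzero]
        · have hyW₂ : y ∈ closure W₂ := hsupp₁ (subset_closure (by
            simpa [hχ₁c, Function.mem_support] using hy))
          have hyU : y ∈ e.baseSet := (hW₂.trans subset_closure).trans hW₃ hyW₂
          have hχ₂y : χ₂c y = 1 := by simp [hχ₂c, hχ₂1 hyW₂]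
          have hσy : ∀ i, σs i y = e.symmL ℂ y (bF i) := by
            intro i
            show χ₂c y • e.symmL ℂ y (bF i) = _
            rw [hχ₂y, one_smul]
          calc ∑ i, (g i • σs i) y
              = ∑ i, (χ₁c y * bF.repr ((e ⟨y, s y⟩).2) i) • e.symmL ℂ y (bF i) := by
                refine Finset.sum_congr rfl fun i _ => ?_
                rw [ContMDiffSection.coe_smul_smoothMap, hσy i]
                rfl
            _ = χ₁c y • e.symmL ℂ y (∑ i, bF.repr ((e ⟨y, s y⟩).2) i • bF i) := by
                rw [map_sum, Finset.smul_sum]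
                refine Finset.sum_congr rfl fun i _ => ?_
                rw [mul_smul, map_smul]
            _ = χ₁c y • s y := by
                rw [bF.sum_repr]
                congr 1
                rw [e.symmL_apply hyU]
                exact e.symm_apply_apply_mk hyU (s y)
      rw [hadd, hsum, key, ContMDiffSection.coe_smul_smoothMap]
      have h1y : (1 - χ₁c) y = 1 - χ₁c y := rfl
      rw [h1y, sub_smul, one_smul, sub_add_cancel]
    rw [hdecomp]
    refine Submodule.add_mem _ ?_ (Submodule.sum_mem _ fun i _ => ?_)
    · refine Submodule.smul_mem_smul ?_ trivial
      have hx1 : χ₁c x = 1 := by simp [hχ₁c, hχ₁1 (subset_closure (hxW₁ rfl))]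
      show (1 - χ₁c) ∈ RingHom.ker (ContMDiffMap.evalRingHom x)
      rw [RingHom.mem_ker]
      show (1 : ℂ) - χ₁c x = 0
      rw [hx1, sub_self]
    · refine Submodule.smul_mem_smul ?_ trivial
      show g i ∈ RingHom.ker (ContMDiffMap.evalRingHom x)
      rw [RingHom.mem_ker]
      show χ₁c x * Lc i ((e ⟨x, s x⟩).2) = 0
      have h0 : (e ⟨x, s x⟩).2 = 0 := by
        rw [hsx]
        exact (e.linear ℂ hx).map_zero
      rw [h0, map_zero, mul_zero]
  have h_iff : ∀ s : Cₛ^∞⟮IM; F, V⟯, s x = 0 ↔ s ∈ N := fun s => ⟨h_hard s, h_easy s⟩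
  refine ⟨h_iff, ?_⟩
  -- the quotient isomorphism
  let evsl : Cₛ^∞⟮IM; F, V⟯ →ₛₗ[(ContMDiffMap.evalRingHom x :
      C^∞⟮IM, M; 𝓘(ℝ, ℂ), ℂ⟯ →+* ℂ)] V x :=
    { toFun := fun s => s x
      map_add' := fun s t => by
        show (s + t) x = s x + t x
        rw [congrFun (ContMDiffSection.coe_add s t) x, Pi.add_apply]
      map_smul' := fun f s => rfl }
  have hle : N ≤ LinearMap.ker evsl := fun s hs => LinearMap.mem_ker.mpr (h_easy s hs)
  let L2 : (Cₛ^∞⟮IM; F, V⟯ ⧸ N) →ₗ[ℂ] V x :=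
    { toFun := N.liftQ evsl hle
      map_add' := map_add (N.liftQ evsl hle)
      map_smul' := by
        intro c q
        obtain ⟨s, rfl⟩ := Submodule.Quotient.mk_surjective N q
        rfl }
  have hinj : Function.Injective L2 := by
    intro q q' hq
    obtain ⟨s, rfl⟩ := Submodule.Quotient.mk_surjective N q
    obtain ⟨t, rfl⟩ := Submodule.Quotient.mk_surjective N q'
    rw [Submodule.Quotient.eq]
    refine h_hard _ ?_
    have hst : s x = t x := hq
    rw [congrFun (ContMDiffSection.coe_sub s t) x, Pi.sub_apply, hst, sub_self]
  have hsurj : Function.Surjective L2 := by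
    intro w
    have hχ₂x : χ₂c x = 1 := by simp [hχ₂c, hχ₂1 (subset_closure (hxW₂ rfl))]
    refine ⟨Submodule.Quotient.mk
      (⟨fun y => χ₂c y • e.symmL ℂ y ((e ⟨x, w⟩).2),
        secOf_contMDiff x χ₂c hsupp₂U ((e ⟨x, w⟩).2)⟩ : Cₛ^∞⟮IM; F, V⟯), ?_⟩
    show χ₂c x • e.symmL ℂ x ((e ⟨x, w⟩).2) = w
    rw [hχ₂x, one_smul]
    rw [e.symmL_apply hx]
    exact e.symm_apply_apply_mk hx w
  exact ⟨LinearEquiv.ofBijective L2 ⟨hinj, hsurj⟩, fun s => rfl⟩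

end
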